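/- Fix n ≥ 1, ν > 0 and σ ∈ (1/2,1]. There exist constants C > 0 and c > 0 such that for every ℓ ∈ {0,1}, every t ≥ 0, and every ξ ∈ ℝⁿ with 0 < |ξ| ≤ ρ: |∂ₜ^ℓ 𝒦₁(t,ξ)| ≤ C e^{−c(1+t)|ξ|^{2σ}} |ξ|^{ℓ}, |∂ₜ^ℓ 𝒦₂(t,ξ)| ≤ C e^{−c(1+t)|ξ|^{2σ}} |ξ|^{ℓ+1}, and |∂ₜ^ℓ 𝒦₃(t,ξ)| ≤ C e^{−c(1+t)|ξ|^{2σ}} |ξ|^{ℓ−1}, where ∂ₜ⁰ denotes the function itself and ∂ₜ¹ its time derivative. -/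

import Mathlib

private lemma abs_mul_le' {x y X Y : ℝ} (hx : |x| ≤ X) (hy : |y| ≤ Y) : |x * y| ≤ X * Y := by
  rw [abs_mul]
  exact mul_le_mul hx hy (abs_nonneg _) ((abs_nonneg x).trans hx)

private lemma abs_div_le' {x d X d₀ : ℝ} (hx : |x| ≤ X) (h0 : 0 < d₀) (hd : d₀ ≤ d) :
    |x / d| ≤ X / d₀ := by
  rw [abs_div, abs_of_pos (h0.trans_le hd)]
  exact div_le_div₀ ((abs_nonneg x).trans hx) hx h0 hd

set_option maxHeartbeats 1600000 in
/-- Pointwise low-frequency estimates for the multipliers `𝒦₁`, `𝒦₂`, `𝒦₃` arising from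
the structurally damped wave equation with `σ ∈ (1/2,1]`, for `ℓ = 0, 1` time derivatives. -/
theorem stmt5 (n : ℕ) (hn : 1 ≤ n) (ν σ : ℝ) (hν : 0 < ν)
    (hσ : σ ∈ Set.Ioc (1/2 : ℝ) 1) (ρ : ℝ)
    (hρ : ρ = (1/2) * (2/ν) ^ ((1:ℝ)/(2*σ - 1)))
    (φ : EuclideanSpace ℝ (Fin n) → ℝ)
    (hφ : ∀ ξ, φ ξ = Real.sqrt (1 - ν^2/4 * ‖ξ‖ ^ (4*σ - 2))) :
    ∃ C > 0, ∃ c > 0, ∀ ℓ : ℕ, ℓ ≤ 1 → ∀ t : ℝ, 0 ≤ t →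
      ∀ ξ : EuclideanSpace ℝ (Fin n), 0 < ‖ξ‖ → ‖ξ‖ ≤ ρ →
        |deriv^[ℓ] (fun s => Real.exp (-(ν/2) * s * ‖ξ‖ ^ (2*σ)) * Real.cos (s * ‖ξ‖ * φ ξ)) t|
            ≤ C * Real.exp (-c * (1 + t) * ‖ξ‖ ^ (2*σ)) * ‖ξ‖ ^ (ℓ:ℝ) ∧
        |deriv^[ℓ] (fun s => Real.exp (-(ν/2) * s * ‖ξ‖ ^ (2*σ)) * ν * ‖ξ‖ *
            Real.sin (s * ‖ξ‖ * φ ξ) / (2 * φ ξ)) t|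
            ≤ C * Real.exp (-c * (1 + t) * ‖ξ‖ ^ (2*σ)) * ‖ξ‖ ^ ((ℓ:ℝ) + 1) ∧
        |deriv^[ℓ] (fun s => Real.exp (-(ν/2) * s * ‖ξ‖ ^ (2*σ)) *
            Real.sin (s * ‖ξ‖ * φ ξ) / (‖ξ‖ * φ ξ)) t|
            ≤ C * Real.exp (-c * (1 + t) * ‖ξ‖ ^ (2*σ)) * ‖ξ‖ ^ ((ℓ:ℝ) - 1) := by
  obtain ⟨hσ1, hσ2⟩ := hσ
  have h21 : 0 < 2*σ - 1 := by linarith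
  have h2ν : (0:ℝ) < 2/ν := by positivity
  have hρ0 : 0 < ρ := by
    rw [hρ]
    have := Real.rpow_pos_of_pos h2ν ((1:ℝ)/(2*σ-1))
    positivity
  have hm1 : (1/2 : ℝ) ^ (4*σ-2) < 1 :=
    Real.rpow_lt_one (by norm_num) (by norm_num) (by linarith)
  set φ₀ : ℝ := Real.sqrt (1 - (1/2 : ℝ) ^ (4*σ - 2)) with hφ₀def
  have hφ₀ : 0 < φ₀ := Real.sqrt_pos.2 (by linarith)
  set P : ℝ := ρ ^ (2*σ - 1) with hPdef
  set R : ℝ := ρ ^ (2*σ) with hRdef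
  have hP0 : 0 < P := Real.rpow_pos_of_pos hρ0 _
  have hR0 : 0 < R := Real.rpow_pos_of_pos hρ0 _
  set A : ℝ := ((ν/2)*P + 1) * (1+ν) * (1 + 1/φ₀) with hAdef
  have hq1 : (1:ℝ) ≤ (ν/2)*P + 1 := by linarith [mul_pos hν hP0]
  have hu0 : (0:ℝ) < 1/φ₀ := by positivity
  have hA0 : 0 < A := by positivity
  have hmono : ∀ x y z : ℝ, 0 ≤ y → 0 ≤ z → x ≤ (ν/2)*P+1 → y ≤ 1+ν → z ≤ 1+1/φ₀ →
      x*y*z ≤ A := by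
    intro x y z hy hz h1 h2 h3
    rw [hAdef]
    exact mul_le_mul (mul_le_mul h1 h2 hy (by positivity)) h3 hz (by positivity)
  have hA1 : (1:ℝ) ≤ A := by
    have := hmono 1 1 1 zero_le_one zero_le_one hq1 (by linarith) (by linarith)
    linarith
  have hA2 : ν/(2*φ₀) ≤ A := by
    have := hmono 1 (ν/2) (1/φ₀) (by positivity) hu0.le hq1 (by linarith) (by linarith)
    have e : ν/(2*φ₀) = 1 * (ν/2) * (1/φ₀) := by
      field_simp
    linarith [e ▸ this]
  have hA3 : 1/φ₀ ≤ A := by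
    have := hmono 1 1 (1/φ₀) zero_le_one hu0.le hq1 (by linarith) (by linarith)
    linarith
  have hA4 : (ν/2)*P + 1 ≤ A := by
    have := hmono ((ν/2)*P+1) 1 1 zero_le_one zero_le_one le_rfl (by linarith) (by linarith)
    linarith
  have hA5 : ν*((ν/2)*P+1)/(2*φ₀) ≤ A := by
    have := hmono ((ν/2)*P+1) (ν/2) (1/φ₀) (by positivity) hu0.le le_rfl (by linarith)
      (by linarith)
    have e : ν*((ν/2)*P+1)/(2*φ₀) = ((ν/2)*P+1) * (ν/2) * (1/φ₀) := by field_simp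
    linarith [e ▸ this]
  have hA6 : ((ν/2)*P+1)/φ₀ ≤ A := by
    have := hmono ((ν/2)*P+1) 1 (1/φ₀) zero_le_one hu0.le le_rfl (by linarith) (by linarith)
    have e : ((ν/2)*P+1)/φ₀ = ((ν/2)*P+1) * 1 * (1/φ₀) := by field_simp
    linarith [e ▸ this]
  -- the exact value of ν²/4 · ρ^{4σ-2}
  have hρ42 : ν^2/4 * ρ ^ (4*σ-2) = (1/2:ℝ) ^ (4*σ-2) := by
    have e1 : ((2/ν) ^ ((1:ℝ)/(2*σ-1))) ^ (4*σ-2) = (2/ν) ^ (2:ℝ) := by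
      rw [← Real.rpow_mul h2ν.le]
      congr 1
      field_simp
      ring
    have e2 : (2/ν) ^ (2:ℝ) = 4/ν^2 := by
      rw [show (2:ℝ) = ((2:ℕ):ℝ) by norm_num, Real.rpow_natCast]
      field_simp
      ring
    rw [hρ, Real.mul_rpow (by norm_num) (Real.rpow_nonneg h2ν.le _), e1, e2]
    field_simp
  refine ⟨A * Real.exp ((ν/2) * R), by positivity, ν/2, by positivity, ?_⟩
  intro ℓ hℓ t ht ξ ha haρ
  set a : ℝ := ‖ξ‖ with hadef
  set Φ : ℝ := φ ξ with hΦdef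
  set r : ℝ := a ^ (2*σ) with hrdef
  have hr0 : 0 < r := Real.rpow_pos_of_pos ha _
  -- bounds for Φ
  have hx : ν^2/4 * a ^ (4*σ-2) ≤ (1/2:ℝ) ^ (4*σ-2) := by
    have h1 : a ^ (4*σ-2) ≤ ρ ^ (4*σ-2) := Real.rpow_le_rpow ha.le haρ (by linarith)
    calc ν^2/4 * a ^ (4*σ-2) ≤ ν^2/4 * ρ ^ (4*σ-2) :=
          mul_le_mul_of_nonneg_left h1 (by positivity)
      _ = (1/2:ℝ) ^ (4*σ-2) := hρ42
  have hxnn : 0 ≤ ν^2/4 * a ^ (4*σ-2) := by positivity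
  have hΦ1 : Φ ≤ 1 := by
    rw [hΦdef, hφ ξ]
    exact Real.sqrt_le_one.2 (by linarith)
  have hΦlb : φ₀ ≤ Φ := by
    rw [hΦdef, hφ ξ, hφ₀def]
    exact Real.sqrt_le_sqrt (by linarith)
  have hΦ0 : 0 < Φ := lt_of_lt_of_le hφ₀ hΦlb
  -- norm power facts
  have hrP : r ≤ a * P := by
    have e : r = a * a ^ (2*σ-1) := by
      have := Real.rpow_add ha 1 (2*σ-1)
      rw [show (1:ℝ) + (2*σ-1) = 2*σ by ring, Real.rpow_one] at this
      rw [hrdef, this]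
    rw [e]
    exact mul_le_mul_of_nonneg_left (Real.rpow_le_rpow ha.le haρ h21.le) ha.le
  have hrR : r ≤ R := Real.rpow_le_rpow ha.le haρ (by linarith)
  have hE0 : 0 < Real.exp (-(ν/2) * t * r) := Real.exp_pos _
  -- master reduction
  have hkey : ∀ Ai p X : ℝ, 0 ≤ Ai → Ai ≤ A → 0 ≤ p →
      |X| ≤ Ai * Real.exp (-(ν/2) * t * r) * p →
      |X| ≤ A * Real.exp ((ν/2) * R) * Real.exp (-(ν/2) * (1 + t) * r) * p := by
    intro Ai p X hAi0 hAiA hp hX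
    have hEE : Real.exp (-(ν/2) * t * r) ≤
        Real.exp ((ν/2) * R) * Real.exp (-(ν/2) * (1 + t) * r) := by
      rw [← Real.exp_add]
      apply Real.exp_le_exp.2
      linarith [mul_nonneg hν.le (sub_nonneg.2 hrR)]
    calc |X| ≤ Ai * Real.exp (-(ν/2) * t * r) * p := hX
      _ ≤ A * (Real.exp ((ν/2) * R) * Real.exp (-(ν/2) * (1 + t) * r)) * p := by
          apply mul_le_mul_of_nonneg_right _ hp
          exact mul_le_mul hAiA hEE hE0.le (hAi0.trans hAiA)
      _ = A * Real.exp ((ν/2) * R) * Real.exp (-(ν/2) * (1 + t) * r) * p := by ring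
  -- derivatives
  have hlin : HasDerivAt (fun s : ℝ => -(ν/2) * s * r) (-(ν/2) * r) t := by
    simpa using ((hasDerivAt_id t).const_mul (-(ν/2))).mul_const r
  have hE' : HasDerivAt (fun s : ℝ => Real.exp (-(ν/2) * s * r))
      (Real.exp (-(ν/2) * t * r) * (-(ν/2) * r)) t := hlin.exp
  have harg : HasDerivAt (fun s : ℝ => s * a * Φ) (a * Φ) t := by
    simpa using ((hasDerivAt_id t).mul_const a).mul_const Φ
  have hcos : HasDerivAt (fun s : ℝ => Real.cos (s * a * Φ))
      (-Real.sin (t * a * Φ) * (a * Φ)) t := harg.cos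
  have hsin : HasDerivAt (fun s : ℝ => Real.sin (s * a * Φ))
      (Real.cos (t * a * Φ) * (a * Φ)) t := harg.sin
  have hEabs : |Real.exp (-(ν/2) * t * r)| ≤ Real.exp (-(ν/2) * t * r) :=
    (Real.abs_exp _).le
  set E : ℝ := Real.exp (-(ν/2) * t * r) with hEdef
  set T : ℝ := t * a * Φ with hTdef
  have hνabs : |ν| ≤ ν := (abs_of_pos hν).le
  have haabs : |a| ≤ a := (abs_of_pos ha).le
  have hΦabs : |Φ| ≤ 1 := by rw [abs_of_pos hΦ0]; exact hΦ1
  have haΦ : |a * Φ| ≤ a * 1 := abs_mul_le' haabs hΦabs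
  have hνr : |(-(ν/2) * r)| ≤ ν/2 * r := by
    rw [abs_of_nonpos (by linarith [mul_pos hν hr0])]
    linarith
  have hnegsin : |(-Real.sin T)| ≤ 1 := by
    rw [abs_neg]; exact Real.abs_sin_le_one T
  have haφ₀Φ : a * φ₀ ≤ a * Φ := mul_le_mul_of_nonneg_left hΦlb ha.le
  have hane : a ≠ 0 := ha.ne'
  have hφ₀ne : φ₀ ≠ 0 := hφ₀.ne'
  interval_cases ℓ
  · -- ℓ = 0
    refine ⟨?_, ?_, ?_⟩
    · simp only [Function.iterate_zero_apply, Nat.cast_zero, Real.rpow_zero]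
      refine hkey 1 1 _ zero_le_one hA1 zero_le_one ?_
      calc |E * Real.cos T| ≤ E * 1 := abs_mul_le' hEabs (Real.abs_cos_le_one T)
        _ = 1 * E * 1 := by ring
    · simp only [Function.iterate_zero_apply, Nat.cast_zero, zero_add, Real.rpow_one]
      refine hkey (ν/(2*φ₀)) a _ (by positivity) hA2 ha.le ?_
      have h1 : |E * ν * a * Real.sin T| ≤ E * ν * a * 1 :=
        abs_mul_le' (abs_mul_le' (abs_mul_le' hEabs hνabs) haabs) (Real.abs_sin_le_one T)
      calc |E * ν * a * Real.sin T / (2*Φ)| ≤ (E * ν * a * 1) / (2*φ₀) :=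
            abs_div_le' h1 (by positivity) (by linarith)
        _ = ν/(2*φ₀) * E * a := by ring
    · simp only [Function.iterate_zero_apply, Nat.cast_zero, zero_sub, Real.rpow_neg_one]
      refine hkey (1/φ₀) a⁻¹ _ (by positivity) hA3 (by positivity) ?_
      have h1 : |E * Real.sin T| ≤ E * 1 := abs_mul_le' hEabs (Real.abs_sin_le_one T)
      calc |E * Real.sin T / (a*Φ)| ≤ (E * 1) / (a*φ₀) :=
            abs_div_le' h1 (by positivity) haφ₀Φ
        _ = 1/φ₀ * E * a⁻¹ := by
            rw [mul_one, mul_comm a φ₀, ← div_div, div_eq_mul_inv (E/φ₀) a]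
            ring
  · -- ℓ = 1
    refine ⟨?_, ?_, ?_⟩
    · simp only [Function.iterate_one, Nat.cast_one, Real.rpow_one]
      have hd : HasDerivAt (fun s : ℝ => Real.exp (-(ν/2) * s * r) * Real.cos (s * a * Φ))
          (E * (-(ν/2)*r) * Real.cos T + E * (-Real.sin T * (a*Φ))) t := hE'.mul hcos
      rw [hd.deriv]
      refine hkey ((ν/2)*P + 1) a _ (by positivity) hA4 ha.le ?_
      have h1 : |E * (-(ν/2)*r) * Real.cos T| ≤ E * (ν/2*r) * 1 :=
        abs_mul_le' (abs_mul_le' hEabs hνr) (Real.abs_cos_le_one T)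
      have h2 : |E * (-Real.sin T * (a*Φ))| ≤ E * (1 * (a*1)) :=
        abs_mul_le' hEabs (abs_mul_le' hnegsin haΦ)
      calc |E * (-(ν/2)*r) * Real.cos T + E * (-Real.sin T * (a*Φ))|
          ≤ |E * (-(ν/2)*r) * Real.cos T| + |E * (-Real.sin T * (a*Φ))| := abs_add_le _ _
        _ ≤ E * (ν/2*r) * 1 + E * (1 * (a*1)) := add_le_add h1 h2
        _ ≤ ((ν/2)*P + 1) * E * a := by
            linarith [mul_nonneg (mul_nonneg hν.le hE0.le) (sub_nonneg.2 hrP)]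
    · rw [show ((1:ℕ):ℝ) + 1 = ((2:ℕ):ℝ) by norm_num, Real.rpow_natCast]
      simp only [Function.iterate_one]
      have hd : HasDerivAt
          (fun s : ℝ => Real.exp (-(ν/2) * s * r) * ν * a * Real.sin (s * a * Φ) / (2*Φ))
          ((E * (-(ν/2)*r) * ν * a * Real.sin T + E * ν * a * (Real.cos T * (a*Φ))) / (2*Φ)) t :=
        (((hE'.mul_const ν).mul_const a).mul hsin).div_const (2*Φ)
      rw [hd.deriv]
      refine hkey (ν*((ν/2)*P+1)/(2*φ₀)) (a^2) _ (by positivity) hA5 (by positivity) ?_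
      have h1 : |E * (-(ν/2)*r) * ν * a * Real.sin T| ≤ E * (ν/2*r) * ν * a * 1 :=
        abs_mul_le' (abs_mul_le' (abs_mul_le' (abs_mul_le' hEabs hνr) hνabs) haabs)
          (Real.abs_sin_le_one T)
      have h2 : |E * ν * a * (Real.cos T * (a*Φ))| ≤ E * ν * a * (1 * (a*1)) :=
        abs_mul_le' (abs_mul_le' (abs_mul_le' hEabs hνabs) haabs)
          (abs_mul_le' (Real.abs_cos_le_one T) haΦ)
      have h3 : |E * (-(ν/2)*r) * ν * a * Real.sin T + E * ν * a * (Real.cos T * (a*Φ))|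
          ≤ E * (ν/2*r) * ν * a * 1 + E * ν * a * (1 * (a*1)) :=
        (abs_add_le _ _).trans (add_le_add h1 h2)
      have hnum : E * (ν/2*r) * ν * a * 1 + E * ν * a * (1 * (a*1)) ≤ ν*((ν/2)*P+1)*E*a^2 := by
        linarith [mul_nonneg (mul_nonneg (mul_nonneg (mul_nonneg hν.le hν.le) hE0.le) ha.le)
          (sub_nonneg.2 hrP)]
      calc |(E * (-(ν/2)*r) * ν * a * Real.sin T + E * ν * a * (Real.cos T * (a*Φ))) / (2*Φ)|
          ≤ (E * (ν/2*r) * ν * a * 1 + E * ν * a * (1 * (a*1))) / (2*φ₀) :=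
            abs_div_le' h3 (by positivity) (by linarith)
        _ ≤ (ν*((ν/2)*P+1)*E*a^2) / (2*φ₀) := by
            exact (div_le_div_iff_of_pos_right (by positivity)).2 hnum
        _ = ν*((ν/2)*P+1)/(2*φ₀) * E * a^2 := by ring
    · rw [show ((1:ℕ):ℝ) - 1 = 0 by norm_num, Real.rpow_zero]
      simp only [Function.iterate_one]
      have hd : HasDerivAt
          (fun s : ℝ => Real.exp (-(ν/2) * s * r) * Real.sin (s * a * Φ) / (a*Φ))
          ((E * (-(ν/2)*r) * Real.sin T + E * (Real.cos T * (a*Φ))) / (a*Φ)) t :=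
        (hE'.mul hsin).div_const (a*Φ)
      rw [hd.deriv]
      refine hkey (((ν/2)*P+1)/φ₀) 1 _ (by positivity) hA6 zero_le_one ?_
      have h1 : |E * (-(ν/2)*r) * Real.sin T| ≤ E * (ν/2*r) * 1 :=
        abs_mul_le' (abs_mul_le' hEabs hνr) (Real.abs_sin_le_one T)
      have h2 : |E * (Real.cos T * (a*Φ))| ≤ E * (1 * (a*1)) :=
        abs_mul_le' hEabs (abs_mul_le' (Real.abs_cos_le_one T) haΦ)
      have h3 : |E * (-(ν/2)*r) * Real.sin T + E * (Real.cos T * (a*Φ))|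
          ≤ E * (ν/2*r) * 1 + E * (1 * (a*1)) := (abs_add_le _ _).trans (add_le_add h1 h2)
      have hnum : E * (ν/2*r) * 1 + E * (1 * (a*1)) ≤ ((ν/2)*P+1)*E*a := by
        linarith [mul_nonneg (mul_nonneg hν.le hE0.le) (sub_nonneg.2 hrP)]
      calc |(E * (-(ν/2)*r) * Real.sin T + E * (Real.cos T * (a*Φ))) / (a*Φ)|
          ≤ (E * (ν/2*r) * 1 + E * (1 * (a*1))) / (a*φ₀) :=
            abs_div_le' h3 (by positivity) haφ₀Φ
        _ ≤ (((ν/2)*P+1)*E*a) / (a*φ₀) := by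
            exact (div_le_div_iff_of_pos_right (by positivity)).2 hnum
        _ = ((ν/2)*P+1)/φ₀ * E * 1 := by
            rw [mul_comm a φ₀, mul_div_mul_right _ _ hane]
            ring
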